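/- arXiv:2307.04085 — 2 statements merged into one kernel-verified Lean document; each statement's English description precedes it below -/
import Mathlib

section
/- Verification identity for AMT opening proofs: with the AMT decomposition of φ, for any leaf index x with binary digits (b₁,...,b_h), φ(X) = φ(x) · 1 + Σ_{j=0}^{h} q_{b₁..b_j}(X) · ∏_{i∈range(b₁..b_j)}(X − i), where the j = 0 term uses the root quotient with vanishing polynomial over all of [N]. -/
open Polynomial

/-- The vanishing polynomial of the node at depth `d`, position `a`, of a full binary
tree of height `h` over the evaluation points `0, ..., 2^h − 1`. -/
noncomputable def vanish (F : Type*) [Field F] (h d a : ℕ) : Polynomial F :=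
  ∏ i ∈ Finset.Ico (a * 2 ^ (h - d)) ((a + 1) * 2 ^ (h - d)), (X - C (i : F))

/-- The AMT remainder at the node at depth `d`, position `a`. -/
noncomputable def AMTr (F : Type*) [Field F] (h : ℕ) (φ : Polynomial F) : ℕ → ℕ → Polynomial F
  | 0, _ => φ %ₘ vanish F h 0 0
  | d + 1, a => AMTr F h φ d (a / 2) %ₘ vanish F h (d + 1) a

/-- The AMT quotient at the node at depth `d`, position `a`. -/
noncomputable def AMTq (F : Type*) [Field F] (h : ℕ) (φ : Polynomial F) : ℕ → ℕ → Polynomial F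
  | 0, _ => φ /ₘ vanish F h 0 0
  | d + 1, a => AMTr F h φ d (a / 2) /ₘ vanish F h (d + 1) a

lemma vanish_monic (F : Type*) [Field F] (h d a : ℕ) : (vanish F h d a).Monic :=
  monic_prod_of_monic _ _ fun _ _ => monic_X_sub_C _

lemma mem_node (h d x : ℕ) (hd : d ≤ h) :
    x ∈ Finset.Ico (x / 2 ^ (h - d) * 2 ^ (h - d)) ((x / 2 ^ (h - d) + 1) * 2 ^ (h - d)) := by
  have hpos : 0 < 2 ^ (h - d) := Nat.pow_pos (by norm_num)
  refine Finset.mem_Ico.mpr ⟨Nat.div_mul_le_self _ _, ?_⟩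
  rw [Nat.add_mul, one_mul]
  exact Nat.lt_div_mul_add hpos

lemma vanish_eval (F : Type*) [Field F] (h d x : ℕ) (hd : d ≤ h) :
    (vanish F h d (x / 2 ^ (h - d))).eval (x : F) = 0 := by
  unfold vanish
  rw [eval_prod]
  exact Finset.prod_eq_zero (mem_node h d x hd) (by simp)

lemma vanish_leaf (F : Type*) [Field F] (h x : ℕ) :
    vanish F h h x = X - C (x : F) := by
  unfold vanish
  rw [Nat.sub_self, pow_zero, mul_one, mul_one, Nat.Ico_succ_singleton, Finset.prod_singleton]

lemma key (F : Type*) [Field F] (h : ℕ) (φ : Polynomial F) (x : ℕ) (hx : x < 2 ^ h) :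
    ∀ d, d ≤ h →
      φ = AMTr F h φ d (x / 2 ^ (h - d))
        + ∑ j ∈ Finset.range (d + 1),
            AMTq F h φ j (x / 2 ^ (h - j)) * vanish F h j (x / 2 ^ (h - j)) := by
  intro d
  induction d with
  | zero =>
    intro _
    have hx0 : x / 2 ^ (h - 0) = 0 := Nat.div_eq_of_lt (by simpa using hx)
    simp only [zero_add, Finset.sum_range_one, hx0]
    show φ = φ %ₘ vanish F h 0 0 + φ /ₘ vanish F h 0 0 * vanish F h 0 0
    have := modByMonic_add_div φ (vanish F h 0 0)
    rw [mul_comm]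
    exact this.symm
  | succ d ih =>
    intro hd
    have hdh : d ≤ h := Nat.le_of_succ_le hd
    have hdiv : x / 2 ^ (h - (d + 1)) / 2 = x / 2 ^ (h - d) := by
      rw [Nat.div_div_eq_div_mul]
      congr 1
      rw [← pow_succ]
      congr 1
      omega
    have hrec := modByMonic_add_div (AMTr F h φ d (x / 2 ^ (h - (d + 1)) / 2))
      (vanish F h (d + 1) (x / 2 ^ (h - (d + 1))))
    rw [Finset.sum_range_succ, ← add_assoc]
    have hr : AMTr F h φ (d + 1) (x / 2 ^ (h - (d + 1)))
        = AMTr F h φ d (x / 2 ^ (h - (d + 1)) / 2) %ₘ vanish F h (d + 1) (x / 2 ^ (h - (d + 1))) := rfl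
    have hq : AMTq F h φ (d + 1) (x / 2 ^ (h - (d + 1)))
        = AMTr F h φ d (x / 2 ^ (h - (d + 1)) / 2) /ₘ vanish F h (d + 1) (x / 2 ^ (h - (d + 1))) := rfl
    rw [hr, hq]
    have hthis := ih hdh
    rw [hdiv] at hrec ⊢
    conv_lhs => rw [hthis, ← hrec]
    ring

lemma leaf_const (F : Type*) [Field F] (h : ℕ) (φ : Polynomial F) (x : ℕ) (hx : x < 2 ^ h) :
    AMTr F h φ h (x / 2 ^ (h - h)) = C ((AMTr F h φ h (x / 2 ^ (h - h))).eval (x : F)) := by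
  have hx' : x / 2 ^ (h - h) = x := by rw [Nat.sub_self, pow_zero, Nat.div_one]
  rw [hx']
  have hex : ∃ p : Polynomial F, AMTr F h φ h x = p %ₘ vanish F h h x := by
    cases h with
    | zero =>
      have hx0 : x = 0 := by omega
      subst hx0
      exact ⟨φ, rfl⟩
    | succ d => exact ⟨_, rfl⟩
  obtain ⟨p, hp⟩ := hex
  rw [hp, vanish_leaf, modByMonic_X_sub_C_eq_C_eval, eval_C]

/-- AMT verification identity: for any leaf index `x < 2^h`,
`φ(X) = φ(x) + ∑_{j=0}^{h} q_j(X) · Z_j(X)`, where `q_j` and `Z_j` are the AMT quotient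
and the vanishing polynomial at the depth-`j` node on the root-to-leaf path of `x`. -/
theorem stmt8 (F : Type*) [Field F] (h : ℕ) (φ : Polynomial F)
    (hdeg : φ.degree < (2 ^ h : ℕ)) (x : ℕ) (hx : x < 2 ^ h) :
    φ = C (φ.eval (x : F))
        + ∑ j ∈ Finset.range (h + 1),
            AMTq F h φ j (x / 2 ^ (h - j)) * vanish F h j (x / 2 ^ (h - j)) := by
  have hkey := key F h φ x hx h le_rfl
  have hconst := leaf_const F h φ x hx
  have heval : (AMTr F h φ h (x / 2 ^ (h - h))).eval (x : F) = φ.eval (x : F) := by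
    conv_rhs => rw [hkey]
    rw [eval_add, eval_finset_sum]
    have : ∀ j ∈ Finset.range (h + 1),
        (AMTq F h φ j (x / 2 ^ (h - j)) * vanish F h j (x / 2 ^ (h - j))).eval (x : F) = 0 := by
      intro j hj
      rw [eval_mul, vanish_eval F h j x (by simpa using Nat.lt_succ_iff.mp (Finset.mem_range.mp hj)),
        mul_zero]
    rw [Finset.sum_congr rfl this]
    simp
  conv_lhs => rw [hkey, hconst, heval]
end

section
/- Rational function identity underlying Verkle multiproofs: for field elements r, t and b₁,...,b_h with t ≠ b_{j+1} for all j, and polynomials f₀,...,f_{h−1} with values u_{j+1} = f_j(b_{j+1}), define g(X) = Σ_{j=0}^{h−1} r^j (f_j(X) − u_{j+1})/(X − b_{j+1}) and h(X) = Σ_{j=0}^{h−1} r^j f_j(X)/(t − b_{j+1}). Then (h(X) − g(X) − (h(t) − g(t)))/(X − t) = Σ_{j=0}^{h−1} (r^j/(t − b_{j+1})) · (f_j(X) − u_{j+1})/(X − b_{j+1}), and both sides are polynomials. -/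
open Polynomial

/-- Verkle multiproof identity: with `πⱼ = (fⱼ(X) − u_{j+1})/(X − b_{j+1})`,
`g(X) = ∑ⱼ rʲ πⱼ(X)` and `h(X) = ∑ⱼ rʲ fⱼ(X)/(t − b_{j+1})`, the opening quotient of
`h − g` at the point `t` equals `∑ⱼ (rʲ/(t − b_{j+1})) · πⱼ(X)`. -/
theorem stmt17 {F : Type*} [Field F] (n : ℕ) (r t : F)
    (b : Fin n → F) (f : Fin n → Polynomial F) (ht : ∀ j, t ≠ b j) :
    ((∑ j : Fin n, C (r ^ (j : ℕ) / (t - b j)) * f j)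
        - (∑ j : Fin n, C (r ^ (j : ℕ)) *
            ((f j - C ((f j).eval (b j))) /ₘ (X - C (b j))))
        - C (((∑ j : Fin n, C (r ^ (j : ℕ) / (t - b j)) * f j)
              - (∑ j : Fin n, C (r ^ (j : ℕ)) *
                  ((f j - C ((f j).eval (b j))) /ₘ (X - C (b j))))).eval t))
      /ₘ (X - C t)
      = ∑ j : Fin n, C (r ^ (j : ℕ) / (t - b j)) *
          ((f j - C ((f j).eval (b j))) /ₘ (X - C (b j))) := by
  have hdvd : ∀ j : Fin n, (X - C (b j)) * ((f j - C ((f j).eval (b j))) /ₘ (X - C (b j)))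
      = f j - C ((f j).eval (b j)) := fun j =>
    mul_divByMonic_eq_iff_isRoot.mpr (by simp [Polynomial.IsRoot])
  have key : ((∑ j : Fin n, C (r ^ (j : ℕ) / (t - b j)) * f j)
        - (∑ j : Fin n, C (r ^ (j : ℕ)) *
            ((f j - C ((f j).eval (b j))) /ₘ (X - C (b j))))
        - C (((∑ j : Fin n, C (r ^ (j : ℕ) / (t - b j)) * f j)
              - (∑ j : Fin n, C (r ^ (j : ℕ)) *
                  ((f j - C ((f j).eval (b j))) /ₘ (X - C (b j))))).eval t))
      = (X - C t) * ∑ j : Fin n, C (r ^ (j : ℕ) / (t - b j)) *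
          ((f j - C ((f j).eval (b j))) /ₘ (X - C (b j))) := by
    simp only [eval_sub, eval_finset_sum, eval_mul, eval_C, map_sub, map_sum,
      Finset.mul_sum, ← Finset.sum_sub_distrib]
    refine Finset.sum_congr rfl fun j _ => ?_
    have hf : f j = (X - C (b j)) * ((f j - C ((f j).eval (b j))) /ₘ (X - C (b j)))
        + C ((f j).eval (b j)) := by rw [hdvd j]; ring
    have hc : C (r ^ (j : ℕ) / (t - b j)) * (C t - C (b j)) = C (r ^ (j : ℕ)) := by
      rw [← C_sub, ← C_mul, div_mul_cancel₀ _ (sub_ne_zero.mpr (ht j))]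
    set q : Polynomial F := (f j - C ((f j).eval (b j))) /ₘ (X - C (b j)) with hq
    rw [hf]
    simp only [eval_add, eval_mul, eval_sub, eval_C, eval_X, map_add, map_mul, map_sub]
    linear_combination (q - C (q.eval t)) * hc
  rw [key, mul_divByMonic_cancel_left _ (monic_X_sub_C t)]
end
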